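/- Let ũ(x) = |x'|^4 - |x''|^4 for x = (x', x'') ∈ ℝ^m × ℝ^m, and let X = ∇ũ/|∇ũ| on the set where ∇ũ ≠ 0. If m ≥ 4, then div X has the same sign as ũ: div X ≥ 0 where ũ ≥ 0 and div X ≤ 0 where ũ ≤ 0 (on the set where ∇ũ ≠ 0). -/

import Mathlib

set_option maxHeartbeats 2000000

open Finset

noncomputable section SimonsAux

/-- Sum of squares of the first `m` coordinates. -/
def sfun (m : ℕ) (y : EuclideanSpace ℝ (Fin (m + m))) : ℝ :=
  ∑ i : Fin m, y (Fin.castAdd m i) ^ 2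

/-- Sum of squares of the last `m` coordinates. -/
def tfun (m : ℕ) (y : EuclideanSpace ℝ (Fin (m + m))) : ℝ :=
  ∑ i : Fin m, y (Fin.natAdd m i) ^ 2

def LSm (m : ℕ) (x : EuclideanSpace ℝ (Fin (m + m))) :
    EuclideanSpace ℝ (Fin (m + m)) →L[ℝ] ℝ :=
  ∑ i : Fin m, (2 * x (Fin.castAdd m i)) • EuclideanSpace.proj (Fin.castAdd m i)

def LTm (m : ℕ) (x : EuclideanSpace ℝ (Fin (m + m))) :
    EuclideanSpace ℝ (Fin (m + m)) →L[ℝ] ℝ :=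
  ∑ i : Fin m, (2 * x (Fin.natAdd m i)) • EuclideanSpace.proj (Fin.natAdd m i)

variable {m : ℕ}

lemma castAdd_ne_natAdd' (i j : Fin m) : Fin.castAdd m i ≠ Fin.natAdd m j := by
  simp only [ne_eq, Fin.ext_iff, Fin.coe_castAdd, Fin.coe_natAdd]; omega

lemma sfun_nonneg (y : EuclideanSpace ℝ (Fin (m + m))) : 0 ≤ sfun m y :=
  Finset.sum_nonneg fun i _ => sq_nonneg _

lemma tfun_nonneg (y : EuclideanSpace ℝ (Fin (m + m))) : 0 ≤ tfun m y :=
  Finset.sum_nonneg fun i _ => sq_nonneg _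

lemma LSm_apply (x v : EuclideanSpace ℝ (Fin (m + m))) :
    LSm m x v = ∑ i : Fin m, 2 * x (Fin.castAdd m i) * v (Fin.castAdd m i) := by
  simp only [LSm, ContinuousLinearMap.sum_apply, ContinuousLinearMap.smul_apply,
    PiLp.proj_apply, smul_eq_mul]

lemma LTm_apply (x v : EuclideanSpace ℝ (Fin (m + m))) :
    LTm m x v = ∑ i : Fin m, 2 * x (Fin.natAdd m i) * v (Fin.natAdd m i) := by
  simp only [LTm, ContinuousLinearMap.sum_apply, ContinuousLinearMap.smul_apply,
    PiLp.proj_apply, smul_eq_mul]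

lemma LSm_single_castAdd (x : EuclideanSpace ℝ (Fin (m + m))) (i : Fin m) :
    LSm m x (EuclideanSpace.single (Fin.castAdd m i) 1) = 2 * x (Fin.castAdd m i) := by
  rw [LSm_apply, Finset.sum_eq_single i]
  · simp [EuclideanSpace.single_apply]
  · intro j _ hj
    rw [EuclideanSpace.single_apply, if_neg (fun h => hj (Fin.castAdd_inj.mp h)), mul_zero]
  · simp

lemma LSm_single_natAdd (x : EuclideanSpace ℝ (Fin (m + m))) (i : Fin m) :
    LSm m x (EuclideanSpace.single (Fin.natAdd m i) 1) = 0 := by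
  rw [LSm_apply]
  refine Finset.sum_eq_zero fun j _ => ?_
  rw [EuclideanSpace.single_apply, if_neg (castAdd_ne_natAdd' j i), mul_zero]

lemma LTm_single_natAdd (x : EuclideanSpace ℝ (Fin (m + m))) (i : Fin m) :
    LTm m x (EuclideanSpace.single (Fin.natAdd m i) 1) = 2 * x (Fin.natAdd m i) := by
  rw [LTm_apply, Finset.sum_eq_single i]
  · simp [EuclideanSpace.single_apply]
  · intro j _ hj
    refine (mul_eq_zero_of_right _ ?_)
    rw [EuclideanSpace.single_apply, if_neg]
    intro h
    exact hj (by simpa [Fin.ext_iff] using h)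
  · simp

lemma LTm_single_castAdd (x : EuclideanSpace ℝ (Fin (m + m))) (i : Fin m) :
    LTm m x (EuclideanSpace.single (Fin.castAdd m i) 1) = 0 := by
  rw [LTm_apply]
  refine Finset.sum_eq_zero fun j _ => ?_
  rw [EuclideanSpace.single_apply, if_neg (fun h => castAdd_ne_natAdd' i j h.symm), mul_zero]

lemma hasFDerivAt_sfun (x : EuclideanSpace ℝ (Fin (m + m))) :
    HasFDerivAt (sfun m) (LSm m x) x := by
  have h := HasFDerivAt.sum (u := Finset.univ)
    (A := fun (i : Fin m) (y : EuclideanSpace ℝ (Fin (m + m))) => y (Fin.castAdd m i) ^ 2)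
    (A' := fun i => (2 * x (Fin.castAdd m i)) • EuclideanSpace.proj (Fin.castAdd m i))
    (x := x)
    (fun i _ => by
      have := (hasDerivAt_pow 2 (x (Fin.castAdd m i))).comp_hasFDerivAt x
          (EuclideanSpace.proj (𝕜 := ℝ) (Fin.castAdd m i)).hasFDerivAt
      simp only [Nat.cast_ofNat, Nat.reduceSub, pow_one, Function.comp_def] at this
      exact this)
  have e : sfun m = ∑ i : Fin m,
      fun (y : EuclideanSpace ℝ (Fin (m + m))) => y (Fin.castAdd m i) ^ 2 := by
    funext y; simp [sfun, Finset.sum_apply]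
  rw [e]; exact h

lemma hasFDerivAt_tfun (x : EuclideanSpace ℝ (Fin (m + m))) :
    HasFDerivAt (tfun m) (LTm m x) x := by
  have h := HasFDerivAt.sum (u := Finset.univ)
    (A := fun (i : Fin m) (y : EuclideanSpace ℝ (Fin (m + m))) => y (Fin.natAdd m i) ^ 2)
    (A' := fun i => (2 * x (Fin.natAdd m i)) • EuclideanSpace.proj (Fin.natAdd m i))
    (x := x)
    (fun i _ => by
      have := (hasDerivAt_pow 2 (x (Fin.natAdd m i))).comp_hasFDerivAt x
          (EuclideanSpace.proj (𝕜 := ℝ) (Fin.natAdd m i)).hasFDerivAt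
      simp only [Nat.cast_ofNat, Nat.reduceSub, pow_one, Function.comp_def] at this
      exact this)
  have e : tfun m = ∑ i : Fin m,
      fun (y : EuclideanSpace ℝ (Fin (m + m))) => y (Fin.natAdd m i) ^ 2 := by
    funext y; simp [tfun, Finset.sum_apply]
  rw [e]; exact h

/-- If `f` has Fréchet derivative `D` at `y`, the `j`-th component of the gradient is
`D (single j 1)`. -/
lemma gradient_apply_single {n : ℕ} {f : EuclideanSpace ℝ (Fin n) → ℝ}
    {D : EuclideanSpace ℝ (Fin n) →L[ℝ] ℝ} {y : EuclideanSpace ℝ (Fin n)}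
    (h : HasFDerivAt f D y) (j : Fin n) :
    gradient f y j = D (EuclideanSpace.single j 1) := by
  have h1 : gradient f y = (InnerProductSpace.toDual ℝ _).symm D := by
    simp only [gradient, h.fderiv]
  have h2 : (inner ℝ (EuclideanSpace.single j (1 : ℝ)) (gradient f y) : ℝ) = gradient f y j := by
    rw [EuclideanSpace.inner_single_left]; simp
  rw [← h2, h1, real_inner_comm, InnerProductSpace.toDual_symm_apply]

end SimonsAux

/-- The Euclidean divergence of a vector field `X : ℝⁿ → ℝⁿ`. -/
noncomputable def diverg {n : ℕ} (X : EuclideanSpace ℝ (Fin n) → EuclideanSpace ℝ (Fin n))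
    (x : EuclideanSpace ℝ (Fin n)) : ℝ :=
  ∑ i : Fin n, fderiv ℝ (fun y => X y i) x (EuclideanSpace.single i 1)

/-- For `ũ(x) = |x'|⁴ - |x''|⁴` on `ℝ^m × ℝ^m` and `X = ∇ũ/|∇ũ|`, if `m ≥ 4` then
`div X` has the same sign as `ũ` on the set where `∇ũ ≠ 0`. -/
theorem simons_cone_calibration_sign (m : ℕ) (hm : 4 ≤ m)
    (u : EuclideanSpace ℝ (Fin (m + m)) → ℝ)
    (hu : ∀ x, u x = (∑ i : Fin m, x (Fin.castAdd m i) ^ 2) ^ 2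
        - (∑ i : Fin m, x (Fin.natAdd m i) ^ 2) ^ 2)
    (X : EuclideanSpace ℝ (Fin (m + m)) → EuclideanSpace ℝ (Fin (m + m)))
    (hX : ∀ x, X x = ‖gradient u x‖⁻¹ • gradient u x) :
    ∀ x, gradient u x ≠ 0 →
      (0 ≤ u x → 0 ≤ diverg X x) ∧ (u x ≤ 0 → diverg X x ≤ 0) := by
  -- derivative of u at any point
  have hD : ∀ y, HasFDerivAt u
      ((2 * sfun m y) • LSm m y - (2 * tfun m y) • LTm m y) y := by
    intro y
    have hu' : u = fun z => sfun m z ^ 2 - tfun m z ^ 2 := funext fun z => hu z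
    rw [hu']
    have h1 : HasFDerivAt (fun z => sfun m z ^ 2) ((2 * sfun m y) • LSm m y) y := by
      simpa only [Nat.cast_ofNat, Nat.reduceSub, pow_one, Function.comp_def] using
        (hasDerivAt_pow 2 (sfun m y)).comp_hasFDerivAt y (hasFDerivAt_sfun y)
    have h2 : HasFDerivAt (fun z => tfun m z ^ 2) ((2 * tfun m y) • LTm m y) y := by
      simpa only [Nat.cast_ofNat, Nat.reduceSub, pow_one, Function.comp_def] using
        (hasDerivAt_pow 2 (tfun m y)).comp_hasFDerivAt y (hasFDerivAt_tfun y)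
    exact h1.sub h2
  -- gradient components
  have hg1 : ∀ y (i : Fin m), gradient u y (Fin.castAdd m i)
      = 4 * sfun m y * y (Fin.castAdd m i) := by
    intro y i
    rw [gradient_apply_single (hD y)]
    simp only [ContinuousLinearMap.sub_apply, ContinuousLinearMap.smul_apply,
      LSm_single_castAdd, LTm_single_castAdd, smul_eq_mul, mul_zero, sub_zero]
    ring
  have hg2 : ∀ y (i : Fin m), gradient u y (Fin.natAdd m i)
      = -(4 * tfun m y * y (Fin.natAdd m i)) := by
    intro y i
    rw [gradient_apply_single (hD y)]
    simp only [ContinuousLinearMap.sub_apply, ContinuousLinearMap.smul_apply,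
      LSm_single_natAdd, LTm_single_natAdd, smul_eq_mul, mul_zero, zero_sub]
    ring
  -- norm of the gradient
  have hnorm : ∀ y, ‖gradient u y‖
      = 4 * Real.sqrt (sfun m y ^ 3 + tfun m y ^ 3) := by
    intro y
    rw [EuclideanSpace.norm_eq]
    rw [Fin.sum_univ_add]
    have e1 : ∀ i : Fin m, ‖gradient u y (Fin.castAdd m i)‖ ^ 2
        = (4 * sfun m y) ^ 2 * y (Fin.castAdd m i) ^ 2 := by
      intro i; rw [hg1, Real.norm_eq_abs, sq_abs]; ring
    have e2 : ∀ i : Fin m, ‖gradient u y (Fin.natAdd m i)‖ ^ 2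
        = (4 * tfun m y) ^ 2 * y (Fin.natAdd m i) ^ 2 := by
      intro i; rw [hg2, Real.norm_eq_abs, sq_abs]; ring
    rw [Finset.sum_congr rfl fun i _ => e1 i, Finset.sum_congr rfl fun i _ => e2 i,
      ← Finset.mul_sum, ← Finset.mul_sum]
    have : (4 * sfun m y) ^ 2 * sfun m y + (4 * tfun m y) ^ 2 * tfun m y
        = 16 * (sfun m y ^ 3 + tfun m y ^ 3) := by ring
    rw [show (∑ i : Fin m, y (Fin.castAdd m i) ^ 2) = sfun m y from rfl,
      show (∑ i : Fin m, y (Fin.natAdd m i) ^ 2) = tfun m y from rfl, this,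
      show (16 : ℝ) * (sfun m y ^ 3 + tfun m y ^ 3)
        = 4 ^ 2 * (sfun m y ^ 3 + tfun m y ^ 3) by norm_num,
      Real.sqrt_mul (by positivity), Real.sqrt_sq (by norm_num)]
  -- component formula for X
  have hX1 : ∀ y (i : Fin m), X y (Fin.castAdd m i)
      = (4 * Real.sqrt (sfun m y ^ 3 + tfun m y ^ 3))⁻¹
          * (4 * sfun m y * y (Fin.castAdd m i)) := by
    intro y i
    rw [hX y]
    show ‖gradient u y‖⁻¹ * gradient u y (Fin.castAdd m i) = _
    rw [hnorm, hg1]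
  have hX2 : ∀ y (i : Fin m), X y (Fin.natAdd m i)
      = (4 * Real.sqrt (sfun m y ^ 3 + tfun m y ^ 3))⁻¹
          * -(4 * tfun m y * y (Fin.natAdd m i)) := by
    intro y i
    rw [hX y]
    show ‖gradient u y‖⁻¹ * gradient u y (Fin.natAdd m i) = _
    rw [hnorm, hg2]
  intro x hx
  set s := sfun m x with hs_def
  set t := tfun m x with ht_def
  set q : ℝ := s ^ 3 + t ^ 3 with hq_def
  have hs0 : 0 ≤ s := sfun_nonneg x
  have ht0 : 0 ≤ t := tfun_nonneg x
  -- q is positive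
  have hq : 0 < q := by
    rcases lt_or_eq_of_le (by positivity : (0:ℝ) ≤ q) with h | h
    · exact h
    · exfalso
      have h3 : s ^ 3 + t ^ 3 = 0 := h.symm
      have hs' : s = 0 := by
        have hs3 : s ^ 3 = 0 :=
          le_antisymm (by nlinarith [pow_nonneg ht0 3]) (pow_nonneg hs0 3)
        exact pow_eq_zero_iff (by norm_num) |>.mp hs3
      have ht' : t = 0 := by
        have ht3 : t ^ 3 = 0 :=
          le_antisymm (by nlinarith [pow_nonneg hs0 3]) (pow_nonneg ht0 3)
        exact pow_eq_zero_iff (by norm_num) |>.mp ht3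
      apply hx
      ext j
      induction j using Fin.addCases with
      | left i => simp [hg1, ← hs_def, hs']
      | right i => rw [hg2, ← ht_def, ht']; simp
  -- derivative pieces at x
  set r := Real.sqrt q with hr_def
  have hr : 0 < r := Real.sqrt_pos.mpr hq
  have hr2 : r ^ 2 = q := Real.sq_sqrt hq.le
  have hq0 : (sfun m x ^ 3 + tfun m x ^ 3) ≠ 0 := ne_of_gt hq
  have hQd : HasFDerivAt (fun y => sfun m y ^ 3 + tfun m y ^ 3)
      ((3 * s ^ 2) • LSm m x + (3 * t ^ 2) • LTm m x) x := by
    have h1 : HasFDerivAt (fun z => sfun m z ^ 3) ((3 * s ^ 2) • LSm m x) x := by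
      simpa only [Nat.cast_ofNat, Nat.reduceSub, Function.comp_def] using
        (hasDerivAt_pow 3 (sfun m x)).comp_hasFDerivAt x (hasFDerivAt_sfun x)
    have h2 : HasFDerivAt (fun z => tfun m z ^ 3) ((3 * t ^ 2) • LTm m x) x := by
      simpa only [Nat.cast_ofNat, Nat.reduceSub, Function.comp_def] using
        (hasDerivAt_pow 3 (tfun m x)).comp_hasFDerivAt x (hasFDerivAt_tfun x)
    exact h1.add h2
  have hsq := hQd.sqrt hq0
  have hc4 := hsq.const_mul (4 : ℝ)
  have h4r0 : (4 : ℝ) * Real.sqrt (sfun m x ^ 3 + tfun m x ^ 3) ≠ 0 := by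
    show (4 : ℝ) * r ≠ 0
    positivity
  have hinv := (hasDerivAt_inv h4r0).comp_hasFDerivAt x hc4
  have hroot : Real.sqrt (sfun m x ^ 3 + tfun m x ^ 3) = r := rfl
  have hr2' : r ^ 2 = s ^ 3 + t ^ 3 := hr2
  -- left components
  have hleft : ∀ i : Fin m, fderiv ℝ (fun y => X y (Fin.castAdd m i)) x
      (EuclideanSpace.single (Fin.castAdd m i) 1)
      = s / r + (2 / r - 3 * s ^ 3 / (r ^ 2 * r)) * x (Fin.castAdd m i) ^ 2 := by
    intro i
    have hprod := ((hasFDerivAt_sfun (m := m) x).const_mul (4 : ℝ)).mul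
      (EuclideanSpace.proj (𝕜 := ℝ) (Fin.castAdd m i)).hasFDerivAt
    have hfun : (fun y => X y (Fin.castAdd m i))
        = fun y => (4 * Real.sqrt (sfun m y ^ 3 + tfun m y ^ 3))⁻¹
            * (4 * sfun m y * y (Fin.castAdd m i)) := funext fun y => hX1 y i
    have hXd : HasFDerivAt (fun y => X y (Fin.castAdd m i))
        ((4 * Real.sqrt (sfun m x ^ 3 + tfun m x ^ 3))⁻¹ •
            ((4 * sfun m x) • EuclideanSpace.proj (Fin.castAdd m i)
              + x (Fin.castAdd m i) • (4 : ℝ) • LSm m x)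
          + (4 * sfun m x * x (Fin.castAdd m i)) •
            (-((4 * Real.sqrt (sfun m x ^ 3 + tfun m x ^ 3)) ^ 2)⁻¹ •
              (4 : ℝ) • (1 / (2 * Real.sqrt (sfun m x ^ 3 + tfun m x ^ 3))) •
                ((3 * s ^ 2) • LSm m x + (3 * t ^ 2) • LTm m x))) x := by
      rw [hfun]
      exact hinv.mul hprod
    rw [hXd.fderiv]
    simp only [ContinuousLinearMap.add_apply, ContinuousLinearMap.smul_apply,
      LSm_single_castAdd, LTm_single_castAdd, PiLp.proj_apply,
      EuclideanSpace.single_apply, eq_self_iff_true, if_true, smul_eq_mul, hroot,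
      ← hs_def, ← ht_def]
    simp only [show Real.sqrt (s ^ 3 + t ^ 3) = r from rfl]
    field_simp
    ring
  -- right components
  have hright : ∀ i : Fin m, fderiv ℝ (fun y => X y (Fin.natAdd m i)) x
      (EuclideanSpace.single (Fin.natAdd m i) 1)
      = -(t / r) - (2 / r - 3 * t ^ 3 / (r ^ 2 * r)) * x (Fin.natAdd m i) ^ 2 := by
    intro i
    have hprod := (((hasFDerivAt_tfun (m := m) x).const_mul (4 : ℝ)).mul
      (EuclideanSpace.proj (𝕜 := ℝ) (Fin.natAdd m i)).hasFDerivAt).neg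
    have hfun : (fun y => X y (Fin.natAdd m i))
        = fun y => (4 * Real.sqrt (sfun m y ^ 3 + tfun m y ^ 3))⁻¹
            * -(4 * tfun m y * y (Fin.natAdd m i)) := funext fun y => hX2 y i
    have hXd : HasFDerivAt (fun y => X y (Fin.natAdd m i))
        ((4 * Real.sqrt (sfun m x ^ 3 + tfun m x ^ 3))⁻¹ •
            (-((4 * tfun m x) • EuclideanSpace.proj (Fin.natAdd m i)
              + x (Fin.natAdd m i) • (4 : ℝ) • LTm m x))
          + (-(4 * tfun m x * x (Fin.natAdd m i))) •
            (-((4 * Real.sqrt (sfun m x ^ 3 + tfun m x ^ 3)) ^ 2)⁻¹ •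
              (4 : ℝ) • (1 / (2 * Real.sqrt (sfun m x ^ 3 + tfun m x ^ 3))) •
                ((3 * s ^ 2) • LSm m x + (3 * t ^ 2) • LTm m x))) x := by
      rw [hfun]
      exact hinv.mul hprod
    rw [hXd.fderiv]
    simp only [ContinuousLinearMap.add_apply, ContinuousLinearMap.smul_apply,
      ContinuousLinearMap.neg_apply, LSm_single_natAdd, LTm_single_natAdd,
      PiLp.proj_apply, EuclideanSpace.single_apply, eq_self_iff_true, if_true,
      smul_eq_mul, hroot, ← hs_def, ← ht_def]
    simp only [show Real.sqrt (s ^ 3 + t ^ 3) = r from rfl]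
    field_simp
    ring
  -- assemble the divergence
  have hdiv : diverg X x
      = ((m : ℝ) * (s / r) + (2 / r - 3 * s ^ 3 / (r ^ 2 * r)) * s)
        - ((m : ℝ) * (t / r) + (2 / r - 3 * t ^ 3 / (r ^ 2 * r)) * t) := by
    unfold diverg
    rw [Fin.sum_univ_add (f := fun j : Fin (m + m) =>
      fderiv ℝ (fun y => X y j) x (EuclideanSpace.single j 1))]
    simp only [hleft, hright]
    rw [Finset.sum_add_distrib, Finset.sum_sub_distrib, Finset.sum_const,
      Finset.sum_const, ← Finset.mul_sum, ← Finset.mul_sum,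
      show (∑ i : Fin m, x (Fin.castAdd m i) ^ 2) = s from rfl,
      show (∑ i : Fin m, x (Fin.natAdd m i) ^ 2) = t from rfl]
    simp only [Finset.card_univ, Fintype.card_fin, nsmul_eq_mul, smul_eq_mul]
    ring
  have hN : diverg X x
      = (((m : ℝ) + 2) * (s - t) * (s ^ 3 + t ^ 3) - 3 * (s ^ 4 - t ^ 4))
          / ((s ^ 3 + t ^ 3) * r) := by
    rw [hdiv, ← hr2']
    field_simp
    ring
  have hqpos : 0 < s ^ 3 + t ^ 3 := hr2' ▸ pow_pos hr 2
  have hux : u x = s ^ 2 - t ^ 2 := hu x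
  have hm' : (4 : ℝ) ≤ (m : ℝ) := by exact_mod_cast hm
  have hst : 0 < s + t := by
    have h1 : 0 < (s + t) ^ 3 := by
      nlinarith [mul_nonneg (mul_nonneg hs0 ht0) (add_nonneg hs0 ht0)]
    nlinarith [h1, sq_nonneg (s + t)]
  constructor
  · intro hu0
    rw [hux] at hu0
    have hst' : t ≤ s := by nlinarith [hst, hu0]
    have hNpos : 0 ≤ ((m : ℝ) + 2) * (s - t) * (s ^ 3 + t ^ 3) - 3 * (s ^ 4 - t ^ 4) := by
      nlinarith [mul_nonneg (mul_nonneg (sub_nonneg.2 hm') (sub_nonneg.2 hst')) hqpos.le,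
        mul_nonneg (add_nonneg hs0 ht0) (pow_nonneg (sub_nonneg.2 hst') 3)]
    rw [hN]
    exact div_nonneg hNpos (mul_pos hqpos hr).le
  · intro hu0
    rw [hux] at hu0
    have hst' : s ≤ t := by nlinarith [hst, hu0]
    have hNneg : ((m : ℝ) + 2) * (s - t) * (s ^ 3 + t ^ 3) - 3 * (s ^ 4 - t ^ 4) ≤ 0 := by
      nlinarith [mul_nonneg (mul_nonneg (sub_nonneg.2 hm') (sub_nonneg.2 hst')) hqpos.le,
        mul_nonneg (add_nonneg hs0 ht0) (pow_nonneg (sub_nonneg.2 hst') 3)]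
    rw [hN]
    exact div_nonpos_of_nonpos_of_nonneg hNneg (mul_pos hqpos hr).le
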